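/- Let p be a prime and f : ℕ → ℕ. For all k, s ∈ ℕ and every j with 0 ≤ j < p, one has binom(k + s·p, j)_f ≡ binom(k,j)_f · f(0)^{s·p} (mod p). -/

import Mathlib

/-- The extended binomial coefficient `binom(k,n)_f`: the sum, over all
`k`-tuples `(π₁,…,π_k)` of nonnegative integers with `π₁ + ⋯ + π_k = n`,
of the products `f(π₁)⋯f(π_k)`. It counts the `f`-weighted integer
compositions of `n` with exactly `k` parts. -/
def extBinom (f : ℕ → ℕ) (k n : ℕ) : ℕ :=
  ∑ π ∈ Finset.Nat.antidiagonalTuple k n, ∏ i, f (π i)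

open PowerSeries

/-- The coefficient of the `k`-th power of `mk g` as a sum over antidiagonal tuples. -/
lemma coeff_mk_pow {R : Type*} [CommSemiring R] (g : ℕ → R) (k n : ℕ) :
    PowerSeries.coeff (R := R) n ((PowerSeries.mk g) ^ k)
      = ∑ π ∈ Finset.Nat.antidiagonalTuple k n, ∏ i, g (π i) := by
  classical
  have hprod : (PowerSeries.mk g) ^ k = ∏ _i : Fin k, PowerSeries.mk g := by
    rw [Finset.prod_const, Finset.card_univ, Fintype.card_fin]
  rw [hprod, PowerSeries.coeff_prod]
  refine Finset.sum_nbij' (i := fun l => ⇑l)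
    (j := fun π => Finsupp.equivFunOnFinite.symm π) ?_ ?_ ?_ ?_ ?_
  · intro l hl
    rw [Finset.mem_finsuppAntidiag] at hl
    rw [Finset.Nat.mem_antidiagonalTuple, ← hl.1]
  · intro π hπ
    rw [Finset.Nat.mem_antidiagonalTuple] at hπ
    rw [Finset.mem_finsuppAntidiag]
    refine ⟨?_, Finset.subset_univ _⟩
    rw [← hπ]
    exact Finset.sum_congr rfl fun i _ => rfl
  · intro l hl
    exact Finsupp.equivFunOnFinite.symm_apply_apply l
  · intro π hπ
    rfl
  · intro l hl
    exact Finset.prod_congr rfl fun i _ => by rw [PowerSeries.coeff_mk]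

lemma cast_extBinom {R : Type*} [CommSemiring R] (f : ℕ → ℕ) (k n : ℕ) :
    ((extBinom f k n : ℕ) : R)
      = PowerSeries.coeff (R := R) n ((PowerSeries.mk fun m => ((f m : ℕ) : R)) ^ k) := by
  rw [coeff_mk_pow, extBinom]
  push_cast
  rfl

theorem extBinom_add_mul_prime (p : ℕ) (hp : p.Prime) (f : ℕ → ℕ)
    (k s j : ℕ) (hj : j < p) :
    extBinom f (k + s * p) j ≡ extBinom f k j * f 0 ^ (s * p) [MOD p] := by
  haveI : Fact p.Prime := ⟨hp⟩
  rw [← ZMod.natCast_eq_natCast_iff]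
  push_cast
  rw [cast_extBinom, cast_extBinom]
  set g : ℕ → ZMod p := fun m => ((f m : ℕ) : ZMod p) with hg
  set F : PowerSeries (ZMod p) := PowerSeries.mk g with hF
  haveI : CharP (PowerSeries (ZMod p)) p :=
    charP_of_injective_ringHom (f := PowerSeries.C (R := ZMod p))
      (fun a b h => by simpa using congrArg (PowerSeries.constantCoeff (R := ZMod p)) h) p
  have ha : PowerSeries.constantCoeff (R := ZMod p) F = g 0 := by
    rw [hF, ← PowerSeries.coeff_zero_eq_constantCoeff_apply, PowerSeries.coeff_mk]
  obtain ⟨G, hFp⟩ : ∃ G, F ^ p = X ^ p * G + PowerSeries.C (R := ZMod p) (g 0 ^ p) := by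
    refine ⟨(PowerSeries.mk fun m => PowerSeries.coeff (R := ZMod p) (m + 1) F) ^ p, ?_⟩
    conv_lhs => rw [F.eq_X_mul_shift_add_const, ha]
    rw [add_pow_char, mul_pow, map_pow]
  obtain ⟨H, hFs⟩ : ∃ H, (F ^ p) ^ s = X ^ p * H + PowerSeries.C (R := ZMod p) (g 0 ^ (s * p)) := by
    induction s with
    | zero => exact ⟨0, by simp⟩
    | succ s ih =>
      obtain ⟨H, ih⟩ := ih
      refine ⟨H * (X ^ p * G) + H * PowerSeries.C (R := ZMod p) (g 0 ^ p)
        + PowerSeries.C (R := ZMod p) (g 0 ^ (s * p)) * G, ?_⟩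
      have hC : PowerSeries.C (R := ZMod p) (g 0 ^ (s * p)) * PowerSeries.C (R := ZMod p) (g 0 ^ p)
          = PowerSeries.C (R := ZMod p) (g 0 ^ ((s + 1) * p)) := by
        rw [← map_mul, ← pow_add, add_mul, one_mul]
      calc (F ^ p) ^ (s + 1)
          = X ^ p * (H * (X ^ p * G) + H * PowerSeries.C (R := ZMod p) (g 0 ^ p)
              + PowerSeries.C (R := ZMod p) (g 0 ^ (s * p)) * G)
            + PowerSeries.C (R := ZMod p) (g 0 ^ (s * p)) * PowerSeries.C (R := ZMod p) (g 0 ^ p) := by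
            rw [pow_succ, ih, hFp]; ring
        _ = _ := by rw [hC]
  rw [pow_add, pow_mul', hFs, mul_add, map_add, ← mul_assoc, mul_comm (F ^ k) (X ^ p),
    mul_assoc, PowerSeries.coeff_mul_C]
  have hzero : PowerSeries.coeff (R := ZMod p) j (X ^ p * (F ^ k * H)) = 0 :=
    PowerSeries.X_pow_dvd_iff.mp ⟨F ^ k * H, rfl⟩ j hj
  rw [hzero, zero_add]
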